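/- For the Abelian distribution with parameters N and p = α/N where 0 < α < 1, the expected value E(Z_{N,α/N}) equals N/(N - (N-1)α). -/

import Mathlib

/-- Density of the Abelian distribution with parameters `N` and `p`,
evaluated at `b`. -/
noncomputable def abelianP (N : ℕ) (p : ℝ) (b : ℕ) : ℝ :=
  ((1 - N * p) / (1 - ((N : ℝ) - 1) * p)) * ((N - 1).choose (b - 1)) *
    p ^ (b - 1) * (1 - b * p) ^ ((N : ℤ) - b - 1) * (b : ℝ) ^ ((b : ℤ) - 2)

open Finset


lemma diff_zero (m : ℕ) : ∀ r < m, ∀ x : ℝ,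
    ∑ j ∈ range (m+1), (-1:ℝ)^(m-j) * (m.choose j) * (x+j)^r = 0 := by
  induction m with
  | zero => intro r hr; omega
  | succ m ih =>
    intro r hr x
    have hbracket : ∑ j ∈ range (m+1), (-1:ℝ)^(m-j) * (m.choose (j+1)) * (x+(j+1:ℕ))^r
          + (-1:ℝ)^(m+1-0) * ((m+1).choose 0) * (x+(0:ℕ))^r
        = -∑ j ∈ range (m+1), (-1:ℝ)^(m-j) * (m.choose j) * (x+j)^r := by
      have := Finset.sum_range_succ' (fun j => (-1:ℝ)^(m+1-j) * (m.choose j) * (x+j)^r) (m+1)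
      have hterms : ∀ j ∈ range (m+1),
          (-1:ℝ)^(m+1-(j+1)) * (m.choose (j+1)) * (x+(j+1:ℕ))^r
          = (-1:ℝ)^(m-j) * (m.choose (j+1)) * (x+(j+1:ℕ))^r := by
        intro j hj; rw [Nat.succ_sub_succ]
      rw [Finset.sum_congr rfl hterms] at this
      have h0 : ((-1:ℝ)^(m+1-0) * ((m+1).choose 0) * (x+(0:ℕ))^r)
          = (-1:ℝ)^(m+1-0) * ((m:ℕ).choose 0) * (x+(0:ℕ))^r := by simp
      rw [h0, ← this, Finset.sum_range_succ]
      simp only [Nat.choose_succ_self, Nat.cast_zero, mul_zero, zero_mul, add_zero]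
      rw [← Finset.sum_neg_distrib]
      apply Finset.sum_congr rfl
      intro j hj
      simp only [mem_range] at hj
      have : m + 1 - j = (m - j) + 1 := by omega
      rw [this, pow_succ]
      ring
    have key : ∑ j ∈ range (m+2), (-1:ℝ)^(m+1-j) * ((m+1).choose j) * (x+j)^r
        = ∑ j ∈ range (m+1), (-1:ℝ)^(m-j) * (m.choose j) * ((x+(j+1))^r - (x+j)^r) := by
      rw [Finset.sum_range_succ' (fun j => (-1:ℝ)^(m+1-j) * ((m+1).choose j) * (x+j)^r) (m+1)]
      have hterms : ∀ j ∈ range (m+1),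
          (-1:ℝ)^(m+1-(j+1)) * ((m+1).choose (j+1)) * (x+(j+1:ℕ))^r
          = (-1:ℝ)^(m-j) * (m.choose j) * (x+(j+1:ℕ))^r
            + (-1:ℝ)^(m-j) * (m.choose (j+1)) * (x+(j+1:ℕ))^r := by
        intro j hj
        rw [Nat.succ_sub_succ, Nat.choose_succ_succ]
        push_cast
        ring
      rw [Finset.sum_congr rfl hterms, Finset.sum_add_distrib, add_assoc, hbracket]
      push_cast
      simp only [mul_sub, sub_eq_add_neg, mul_add, mul_neg, Finset.sum_add_distrib,
        Finset.sum_neg_distrib]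
    rw [key]
    have hdiff : ∀ j : ℕ, (x+(j+1):ℝ)^r - (x+j)^r
        = ∑ s ∈ range r, (r.choose s : ℝ) * (x+j)^s := by
      intro j
      have : (x+(j+1):ℝ)^r = ((x+j)+1)^r := by ring_nf
      rw [this, add_pow]
      simp only [one_pow, mul_one]
      rw [Finset.sum_range_succ, Nat.choose_self]
      rw [Nat.cast_one, mul_one, add_sub_cancel_right]
      apply Finset.sum_congr rfl
      intro s hs; ring
    calc ∑ j ∈ range (m+1), (-1:ℝ)^(m-j) * (m.choose j) * ((x+(j+1))^r - (x+j)^r)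
        = ∑ j ∈ range (m+1), ∑ s ∈ range r,
            (r.choose s : ℝ) * ((-1:ℝ)^(m-j) * (m.choose j) * (x+j)^s) := by
          apply Finset.sum_congr rfl
          intro j hj
          rw [hdiff, Finset.mul_sum]
          apply Finset.sum_congr rfl
          intro s hs; ring
      _ = ∑ s ∈ range r, (r.choose s : ℝ)
            * ∑ j ∈ range (m+1), (-1:ℝ)^(m-j) * (m.choose j) * (x+j)^s := by
          rw [Finset.sum_comm]
          apply Finset.sum_congr rfl
          intro s hs; rw [Finset.mul_sum]
      _ = 0 := by
          apply Finset.sum_eq_zero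
          intro s hs
          simp only [mem_range] at hs
          rw [ih s (by omega) x, mul_zero]


lemma sum_range_split (m : ℕ) (g : ℕ → ℝ) :
    ∑ j ∈ range (m+1), g j = g 0 + ∑ j ∈ Icc 1 m, g j := by
  rw [Finset.range_eq_Ico, Finset.sum_eq_sum_Ico_succ_bot (Nat.succ_pos m),
    Nat.succ_eq_add_one, zero_add, Finset.Ico_add_one_right_eq_Icc]

lemma abel_id (n : ℕ) (x y : ℝ) :
    y^n + ∑ j ∈ Icc 1 n, (n.choose j : ℝ) * x * (x+j)^(j-1) * (y-j)^(n-j) = (x+y)^n := by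
  set F : ℕ → ℕ → ℝ := fun j i =>
    (-1:ℝ)^i * (n.choose j) * ((n-j).choose i) * x * (x+j)^(j-1+i) * (x+y)^(n-j-i) with hF
  have expand : ∀ j ∈ Icc 1 n, (n.choose j : ℝ) * x * (x+j)^(j-1) * (y-j)^(n-j)
      = ∑ i ∈ range (n-j+1), F j i := by
    intro j hj
    have hy : y - (j:ℝ) = (-(x+j)) + (x+y) := by ring
    have hp : ((-(x+(j:ℝ))) + (x+y))^(n-j)
        = ∑ i ∈ range (n-j+1), (-(x+(j:ℝ)))^i * (x+y)^(n-j-i) * ((n-j).choose i) :=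
      add_pow _ _ _
    rw [hy, hp, Finset.mul_sum]
    apply Finset.sum_congr rfl
    intro i hi
    simp only [hF]
    rw [show (-(x+(j:ℝ)))^i = (-1:ℝ)^i * (x+(j:ℝ))^i from neg_pow _ _]
    rw [pow_add (x+(j:ℝ)) (j-1) i]
    ring
  rw [Finset.sum_congr rfl expand]
  have tri : ∑ j ∈ Icc 1 n, ∑ i ∈ range (n-j+1), F j i
      = ∑ m ∈ Icc 1 n, ∑ j ∈ Icc 1 m, F j (m-j) := by
    rw [Finset.sum_sigma', Finset.sum_sigma']
    refine Finset.sum_nbij' (fun p => ⟨p.1 + p.2, p.1⟩) (fun q => ⟨q.2, q.1 - q.2⟩)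
      ?_ ?_ ?_ ?_ ?_
    · rintro ⟨a, b⟩ h
      simp only [Finset.mem_sigma, Finset.mem_Icc, Finset.mem_range] at h ⊢
      omega
    · rintro ⟨a, b⟩ h
      simp only [Finset.mem_sigma, Finset.mem_Icc, Finset.mem_range] at h ⊢
      omega
    · rintro ⟨a, b⟩ h
      simp [Nat.add_sub_cancel_left]
    · rintro ⟨a, b⟩ h
      simp only [Finset.mem_sigma, Finset.mem_Icc] at h
      have hba : b + (a - b) = a := by omega
      simp [hba]
    · rintro ⟨a, b⟩ h
      simp only [Nat.add_sub_cancel_left]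
  rw [tri]
  have inner : ∀ m ∈ Icc 1 n, ∑ j ∈ Icc 1 m, F j (m-j)
      = -((-1:ℝ)^m * (n.choose m) * x^m * (x+y)^(n-m)) := by
    intro m hm
    simp only [Finset.mem_Icc] at hm
    have hcongr : ∀ j ∈ Icc 1 m, F j (m-j)
        = (n.choose m : ℝ) * (x+y)^(n-m) * x * ((-1:ℝ)^(m-j) * (m.choose j) * (x+j)^(m-1)) := by
      intro j hj
      simp only [Finset.mem_Icc] at hj
      rw [hF]
      have e1 : j - 1 + (m - j) = m - 1 := by omega
      have e2 : n - j - (m - j) = n - m := by omega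
      have e3 : ((n.choose j : ℝ)) * ((n-j).choose (m-j)) = (n.choose m) * (m.choose j) := by
        rw [← Nat.cast_mul, ← Nat.cast_mul, Nat.choose_mul (n := n) hj.2]
      simp only [e1, e2]
      calc (-1:ℝ)^(m-j) * (n.choose j) * ((n-j).choose (m-j)) * x * (x+j)^(m-1) * (x+y)^(n-m)
          = ((n.choose j : ℝ) * ((n-j).choose (m-j))) * ((-1:ℝ)^(m-j) * x * (x+j)^(m-1) * (x+y)^(n-m)) := by ring
        _ = ((n.choose m : ℝ) * (m.choose j)) * ((-1:ℝ)^(m-j) * x * (x+j)^(m-1) * (x+y)^(n-m)) := by rw [e3]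
        _ = (n.choose m : ℝ) * (x+y)^(n-m) * x * ((-1:ℝ)^(m-j) * (m.choose j) * (x+j)^(m-1)) := by ring
    rw [Finset.sum_congr rfl hcongr, ← Finset.mul_sum]
    have hz := diff_zero m (m-1) (by omega) x
    rw [sum_range_split m (fun j => (-1:ℝ)^(m-j) * (m.choose j) * (x+j)^(m-1))] at hz
    simp only [Nat.sub_zero, Nat.choose_zero_right, Nat.cast_one, mul_one, Nat.cast_zero,
      add_zero] at hz
    have hsum : ∑ j ∈ Icc 1 m, (-1:ℝ)^(m-j) * (m.choose j) * (x+j)^(m-1)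
        = -((-1:ℝ)^m * x^(m-1)) := by linarith
    rw [hsum]
    have : x * -((-1:ℝ)^m * x^(m-1)) = -((-1:ℝ)^m * (x * x^(m-1))) := by ring
    have hx : x * x^(m-1) = x^m := by
      rw [← pow_succ']
      congr 1
      omega
    calc (n.choose m : ℝ) * (x+y)^(n-m) * x * -((-1:ℝ)^m * x^(m-1))
        = -((-1:ℝ)^m * (n.choose m) * (x * x^(m-1)) * (x+y)^(n-m)) := by ring
      _ = -((-1:ℝ)^m * (n.choose m) * x^m * (x+y)^(n-m)) := by rw [hx]
  rw [Finset.sum_congr rfl inner]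
  have hyn : y^n = (x+y)^n + ∑ m ∈ Icc 1 n, (-1:ℝ)^m * (n.choose m) * x^m * (x+y)^(n-m) := by
    have hy : y = (-x) + (x+y) := by ring
    calc y^n = ((-x) + (x+y))^n := by rw [← hy]
      _ = ∑ m ∈ range (n+1), (-x)^m * (x+y)^(n-m) * (n.choose m) := add_pow _ _ _
      _ = (x+y)^n + ∑ m ∈ Icc 1 n, (-1:ℝ)^m * (n.choose m) * x^m * (x+y)^(n-m) := by
          rw [sum_range_split n (fun m => (-x)^m * (x+y)^(n-m) * (n.choose m))]
          simp only [pow_zero, one_mul, Nat.sub_zero, Nat.choose_zero_right, Nat.cast_one,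
            mul_one]
          congr 1
          apply Finset.sum_congr rfl
          intro m hm
          rw [neg_pow]
          ring
  rw [hyn, add_assoc, ← Finset.sum_add_distrib]
  have hz : ∑ m ∈ Icc 1 n, ((-1:ℝ)^m * (n.choose m) * x^m * (x+y)^(n-m)
      + -((-1:ℝ)^m * (n.choose m) * x^m * (x+y)^(n-m))) = 0 :=
    Finset.sum_eq_zero (fun m hm => by ring)
  rw [hz, add_zero]


theorem abelian_mean (N : ℕ) (hN : 0 < N) (α : ℝ) (hα : 0 < α) (hα' : α < 1) :
    ∑ b ∈ Finset.Icc 1 N, (b : ℝ) * abelianP N (α / N) b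
      = N / (N - (N - 1) * α) := by
  obtain ⟨M, rfl⟩ : ∃ M, N = M + 1 := ⟨N - 1, by omega⟩
  set N := M + 1 with hNdef
  have hNR : (0:ℝ) < N := by positivity
  have hNne : (N:ℝ) ≠ 0 := ne_of_gt hNR
  set p : ℝ := α / N with hp
  have hppos : 0 < p := by positivity
  have hpne : p ≠ 0 := ne_of_gt hppos
  have hNp : (N:ℝ) * p = α := by rw [hp]; field_simp
  have hNp1 : 1 - (N:ℝ) * p ≠ 0 := by rw [hNp]; linarith
  have hden : (0:ℝ) < 1 - ((N:ℝ) - 1) * p := by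
    have h1 : ((N:ℝ) - 1) * p < (N:ℝ) * p := by
      apply mul_lt_mul_of_pos_right _ hppos
      linarith
    rw [hNp] at h1
    linarith
  have hdne : (1 - ((N:ℝ) - 1) * p) ≠ 0 := ne_of_gt hden
  -- the key sum
  set T : ℕ → ℝ := fun b =>
    (1 - N * p) * (((N-1).choose (b-1) : ℕ) : ℝ) * p ^ (b-1)
      * (1 - b * p) ^ ((N:ℤ) - b - 1) * (b : ℝ) ^ ((b:ℤ) - 1) with hT
  have key : ∑ b ∈ Icc 1 N, T b = 1 := by
    have hsplit : ∑ b ∈ Icc 1 N, T b = ∑ b ∈ Icc 1 M, T b + T N := by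
      rw [hNdef, Finset.sum_Icc_succ_top (by omega)]
    set x : ℝ := 1/p - N with hx
    have hTN : T N = p ^ M * (N:ℝ) ^ M := by
      rw [hT]
      simp only [hNdef]
      rw [show (M+1) - 1 = M by omega, Nat.choose_self]
      rw [show ((M+1:ℕ):ℤ) - ((M+1:ℕ):ℤ) - 1 = -1 by ring]
      rw [show ((M+1:ℕ):ℤ) - 1 = ((M:ℕ):ℤ) by push_cast; ring]
      rw [zpow_natCast, zpow_neg_one]
      rw [← hNdef]
      field_simp
      norm_num
    have hstep : ∀ b ∈ Icc 1 M, T b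
        = p ^ M * ((M.choose (N-b) : ℝ) * x * (x + (N-b:ℕ)) ^ ((N-b) - 1)
            * ((N:ℝ) - (N-b:ℕ)) ^ (M - (N-b))) := by
      intro b hb
      simp only [Finset.mem_Icc] at hb
      have hb1 : 1 ≤ b := hb.1
      have hbM : b ≤ M := hb.2
      have hcast : ((N - b : ℕ) : ℝ) = (N:ℝ) - b := by
        rw [Nat.cast_sub (by omega)]
      have hchoose : M.choose (N - b) = (N-1).choose (b-1) := by
        rw [show N - b = M - (b-1) by omega, show (N:ℕ)-1 = M by omega]
        rw [Nat.choose_symm (by omega : b - 1 ≤ M)]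
      have hz1 : (1 - (b:ℝ) * p) ^ ((N:ℤ) - b - 1) = (1 - (b:ℝ) * p) ^ ((N - b - 1 : ℕ)) := by
        rw [show (N:ℤ) - b - 1 = ((N - b - 1 : ℕ) : ℤ) by push_cast [hNdef]; omega]
        rw [zpow_natCast]
      have hz2 : (b:ℝ) ^ ((b:ℤ) - 1) = (b:ℝ) ^ ((b - 1 : ℕ)) := by
        rw [show (b:ℤ) - 1 = ((b - 1 : ℕ) : ℤ) by omega, zpow_natCast]
      rw [hT]
      simp only [hz1, hz2, hchoose]
      rw [hcast]
      rw [show (N:ℝ) - ((N:ℝ) - b) = (b:ℝ) by ring]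
      rw [show x + ((N:ℝ) - b) = 1/p - b by rw [hx]; ring]
      rw [show M - (N - b) = b - 1 by omega]
      rw [show (N - b) - 1 = N - b - 1 from rfl]
      -- now pure real algebra with nat powers
      have e1 : 1 - (N:ℝ) * p = p * x := by rw [hx]; field_simp
      have e2 : 1 - (b:ℝ) * p = p * (1/p - b) := by field_simp
      rw [e1, e2, mul_pow]
      have e3 : p * p ^ (b-1) * p ^ (N-b-1) = p ^ M := by
        rw [← pow_succ', ← pow_add]
        congr 1
        omega
      calc p * x * ((N-1).choose (b-1) : ℝ) * p^(b-1) * (p^(N-b-1) * (1/p - b)^(N-b-1)) * (b:ℝ)^(b-1)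
          = (p * p^(b-1) * p^(N-b-1)) * (((N-1).choose (b-1) : ℝ) * x * (1/p - b)^(N-b-1) * (b:ℝ)^(b-1)) := by ring
        _ = p ^ M * (((N-1).choose (b-1) : ℝ) * x * (1/p - b)^(N-b-1) * (b:ℝ)^(b-1)) := by rw [e3]
    have hre : ∑ b ∈ Icc 1 M, T b
        = ∑ j ∈ Icc 1 M, p ^ M * ((M.choose j : ℝ) * x * (x + j) ^ (j-1)
            * ((N:ℝ) - j) ^ (M - j)) := by
      refine Finset.sum_nbij' (fun b => N - b) (fun j => N - j) ?_ ?_ ?_ ?_ ?_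
      · intro a ha; simp only [Finset.mem_Icc] at ha ⊢; omega
      · intro a ha; simp only [Finset.mem_Icc] at ha ⊢; omega
      · intro a ha; simp only [Finset.mem_Icc] at ha; show N - (N - a) = a; omega
      · intro a ha; simp only [Finset.mem_Icc] at ha; show N - (N - a) = a; omega
      · intro b hb
        rw [hstep b hb]
    have habel := abel_id M x (N:ℝ)
    rw [hsplit, hre, hTN, ← Finset.mul_sum, ← mul_add]
    have : ∑ j ∈ Icc 1 M, (M.choose j : ℝ) * x * (x + j) ^ (j-1) * ((N:ℝ) - j) ^ (M - j)
        + (N:ℝ) ^ M = (1/p) ^ M := by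
      rw [show (1/p : ℝ) = x + N by rw [hx]; ring]
      linarith [habel]
    rw [this, ← mul_pow]
    rw [mul_one_div_cancel hpne, one_pow]
  -- relate to abelianP
  have hterm : ∀ b ∈ Icc 1 N, (b:ℝ) * abelianP N p b = (1 - ((N:ℝ) - 1) * p)⁻¹ * T b := by
    intro b hb
    simp only [Finset.mem_Icc] at hb
    have hbne : (b:ℝ) ≠ 0 := by
      simp only [ne_eq, Nat.cast_eq_zero]
      omega
    have hbz : (b:ℝ) ^ ((b:ℤ) - 1) = (b:ℝ) ^ ((b:ℤ) - 2) * b := by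
      rw [show (b:ℤ) - 1 = ((b:ℤ) - 2) + 1 by ring, zpow_add_one₀ hbne]
    rw [abelianP]
    simp only [hT]
    rw [hbz, div_eq_mul_inv]
    ring
  rw [Finset.sum_congr rfl hterm, ← Finset.mul_sum, key, mul_one]
  rw [show (N:ℝ) - ((N:ℝ) - 1) * α = (N:ℝ) * (1 - ((N:ℝ)-1) * p) by rw [hp]; field_simp]
  rw [eq_comm, div_mul_eq_div_div_swap, div_right_comm, div_self hNne]
  exact one_div _
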